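/- Let β ∈ (0,1), λ > 0, and let X be a nonnegative random variable on a probability space with E[X^{2β}] < ∞. Set q = λ/Γ(1+β) and d = β q² B(β, 1+β). Then 2 d · E[X^{2β}] − q² · (E[X^β])² ≥ 0. (This is the overdispersion property: for the generalized fractional negative binomial process, whose variance minus mean equals 2 d E[X^{2β}] − (q E[X^β])² with X the value of the Mittag-Leffler Lévy subordinator at time t, the variance always dominates the mean.) -/

import Mathlib

open Real MeasureTheory

/-- Beta function in terms of the real Gamma function. -/
noncomputable def betaFn (z₁ z₂ : ℝ) : ℝ :=
  Real.Gamma z₁ * Real.Gamma z₂ / Real.Gamma (z₁ + z₂)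

/-- Two-point majorization inequality for convex functions. -/
lemma convex_two_point {f : ℝ → ℝ} {s : Set ℝ} (hf : ConvexOn ℝ s f) {a b c d : ℝ}
    (ha : a ∈ s) (hb : b ∈ s) (hac : a ≤ c) (hcb : c ≤ b) (had : a ≤ d) (hdb : d ≤ b)
    (hsum : a + b = c + d) : f c + f d ≤ f a + f b := by
  rcases eq_or_lt_of_le (hac.trans hcb) with heq | hab
  · have hc : c = a := le_antisymm (heq ▸ hcb) hac
    have hd : d = a := le_antisymm (heq ▸ hdb) had
    rw [hc, hd, ← heq]
  · set t : ℝ := (b - c) / (b - a) with ht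
    have hba : (0:ℝ) < b - a := by linarith
    have ht0 : 0 ≤ t := div_nonneg (by linarith) hba.le
    have ht1 : t ≤ 1 := (div_le_one hba).2 (by linarith)
    have htval : t * (b - a) = b - c := by
      rw [ht, div_mul_cancel₀ _ hba.ne']
    have hc : c = t * a + (1 - t) * b := by nlinarith [htval]
    have hd : d = (1 - t) * a + t * b := by nlinarith [htval, hsum]
    have h1 := hf.2 ha hb ht0 (by linarith : (0:ℝ) ≤ 1 - t)
      (by ring : t + (1 - t) = 1)
    have h2 := hf.2 ha hb (by linarith : (0:ℝ) ≤ 1 - t) ht0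
      (by ring : 1 - t + t = 1)
    simp only [smul_eq_mul] at h1 h2
    rw [hc, hd]
    nlinarith [h1, h2]

lemma Gamma_ineq {β : ℝ} (hβ0 : 0 < β) (hβ1 : β < 1) :
    Real.Gamma (1 + 2 * β) ≤ (1 + β) * Real.Gamma (1 + β) ^ 2 := by
  have h1 : (0:ℝ) < 1 + β := by linarith
  have h2 : (0:ℝ) < 2 + β := by linarith
  have h3 : (0:ℝ) < 1 + 2 * β := by linarith
  have key := convex_two_point Real.convexOn_log_Gamma
    (a := 1 + β) (b := 2 + β) (c := 2) (d := 1 + 2 * β)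
    (Set.mem_Ioi.2 h1) (Set.mem_Ioi.2 h2)
    (by linarith) (by linarith) (by linarith) (by linarith) (by ring)
  simp only [Function.comp_apply] at key
  have hG1 := Real.Gamma_pos_of_pos h1
  have hG2 := Real.Gamma_pos_of_pos h2
  have hG3 := Real.Gamma_pos_of_pos h3
  have hGt : Real.Gamma 2 = 1 := Real.Gamma_two
  rw [hGt, Real.log_one, zero_add] at key
  have := Real.exp_le_exp.2 key
  rw [Real.exp_log hG3, Real.exp_add, Real.exp_log hG1, Real.exp_log hG2] at this
  have hrec : Real.Gamma (2 + β) = (1 + β) * Real.Gamma (1 + β) := by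
    have := Real.Gamma_add_one (show (1:ℝ) + β ≠ 0 by positivity)
    rw [show (1:ℝ) + β + 1 = 2 + β by ring] at this
    exact this
  calc Real.Gamma (1 + 2 * β) ≤ Real.Gamma (1 + β) * Real.Gamma (2 + β) := this
    _ = (1 + β) * Real.Gamma (1 + β) ^ 2 := by rw [hrec]; ring

theorem overdispersion {Ω : Type*} [MeasurableSpace Ω] (μ : Measure Ω)
    [IsProbabilityMeasure μ] (X : Ω → ℝ) (hX : Measurable X)
    (hXnn : ∀ ω, 0 ≤ X ω) (β lam : ℝ) (hβ : β ∈ Set.Ioo (0 : ℝ) 1)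
    (hlam : 0 < lam)
    (hint : Integrable (fun ω => X ω ^ (2 * β)) μ)
    (q d : ℝ) (hq : q = lam / Real.Gamma (1 + β))
    (hd : d = β * q ^ 2 * betaFn β (1 + β)) :
    0 ≤ 2 * d * (∫ ω, X ω ^ (2 * β) ∂μ) - q ^ 2 * (∫ ω, X ω ^ β ∂μ) ^ 2 := by
  obtain ⟨hβ0, hβ1⟩ := hβ
  have h1 : (0:ℝ) < 1 + β := by linarith
  have h3 : (0:ℝ) < 1 + 2 * β := by linarith
  have hG1 := Real.Gamma_pos_of_pos h1
  have hG3 := Real.Gamma_pos_of_pos h3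
  have hGβ := Real.Gamma_pos_of_pos hβ0
  -- q² ≤ 2d
  have hqpos : 0 < q := hq ▸ div_pos hlam hG1
  have hβΓ : β * Real.Gamma β = Real.Gamma (1 + β) := by
    rw [add_comm, Real.Gamma_add_one hβ0.ne', mul_comm]
  have hkey := Gamma_ineq hβ0 hβ1
  have hq2d : q ^ 2 ≤ 2 * d := by
    have h2d : 2 * d = q ^ 2 * (2 * Real.Gamma (1 + β) ^ 2 / Real.Gamma (1 + 2 * β)) := by
      rw [hd, betaFn, show β + (1 + β) = 1 + 2 * β by ring]
      field_simp
      nlinarith [hβΓ, mul_pos hG1 (mul_pos hqpos hqpos), sq_nonneg q,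
        mul_right_cancel₀ hG1.ne' (a := β * Real.Gamma β) rfl]
    rw [h2d]
    have : (1:ℝ) ≤ 2 * Real.Gamma (1 + β) ^ 2 / Real.Gamma (1 + 2 * β) := by
      rw [le_div_iff₀ hG3, one_mul]
      nlinarith [hkey, sq_nonneg (Real.Gamma (1 + β))]
    nlinarith [sq_nonneg q]
  -- Jensen: (∫ X^β)² ≤ ∫ X^{2β}
  have hsq : ∀ ω, X ω ^ (2 * β) = (X ω ^ β) ^ 2 := fun ω => by
    rw [show (2 * β) = β * 2 by ring, Real.rpow_mul (hXnn ω), Real.rpow_two]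
  have hYm : Measurable fun ω => X ω ^ β := (Real.continuous_rpow_const hβ0.le).measurable.comp hX
  have hY2int : Integrable (fun ω => (X ω ^ β) ^ 2) μ := by
    simpa only [hsq] using hint
  have hmem : MemLp (fun ω => X ω ^ β) 2 μ :=
    (memLp_two_iff_integrable_sq hYm.aestronglyMeasurable).2 hY2int
  have hvar := ProbabilityTheory.variance_nonneg (fun ω => X ω ^ β) μ
  rw [ProbabilityTheory.variance_eq_sub hmem] at hvar
  simp only [Pi.pow_apply] at hvar
  have hjensen : (∫ ω, X ω ^ β ∂μ) ^ 2 ≤ ∫ ω, X ω ^ (2 * β) ∂μ := by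
    have : ∫ ω, X ω ^ (2 * β) ∂μ = ∫ ω, (X ω ^ β) ^ 2 ∂μ := by
      simp only [hsq]
    linarith [hvar, this.le, this.ge]
  have hA : 0 ≤ ∫ ω, X ω ^ (2 * β) ∂μ :=
    integral_nonneg fun ω => Real.rpow_nonneg (hXnn ω) _
  nlinarith [sq_nonneg (∫ ω, X ω ^ β ∂μ), sq_nonneg q, hjensen, hA, hq2d]
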